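/- Let n > 2 be a real number, let y < 0 be a real number, set x = d_n(y) = n/(y − 1) + 1, and assume x < 0 and (x, y) ≠ (−1, −1). Let S be the smallest subset of ℝ containing y that is closed under the parallel composition (a, b) ↦ a·b and under the series composition (a, b) ↦ d_n(d_n(a)·d_n(b)). Then S is dense in ℝ. -/

import Mathlib

/-- The Potts duality map with `n` colors: the dual weight of `y` is `n / (y - 1) + 1`,
so that `(x - 1) * (y - 1) = n` for `x = pottsDual n y`. -/
noncomputable def pottsDual (n y : ℝ) : ℝ := n / (y - 1) + 1

/-- `PottsGen n y` is (the membership predicate of) the smallest subset of `ℝ` containing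
`y` that is closed under parallel composition `(a, b) ↦ a * b` and series composition
`(a, b) ↦ pottsDual n (pottsDual n a * pottsDual n b)`. -/
inductive PottsGen (n y : ℝ) : ℝ → Prop
  | base : PottsGen n y y
  | parallel {a b : ℝ} : PottsGen n y a → PottsGen n y b → PottsGen n y (a * b)
  | series {a b : ℝ} : PottsGen n y a → PottsGen n y b →
      PottsGen n y (pottsDual n (pottsDual n a * pottsDual n b))

lemma pottsDual_one (n : ℝ) : pottsDual n 1 = 1 := by simp [pottsDual]

lemma pottsDual_eq_one_iff {n : ℝ} (hn : n ≠ 0) {t : ℝ} : pottsDual n t = 1 ↔ t = 1 := by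
  unfold pottsDual
  constructor
  · intro h
    have h2 : n / (t - 1) = 0 := by linarith
    rcases div_eq_zero_iff.1 h2 with h3 | h3
    · exact absurd h3 hn
    · linarith
  · rintro rfl; simp

lemma pottsDual_pottsDual {n : ℝ} (hn : n ≠ 0) {t : ℝ} (ht : t ≠ 1) :
    pottsDual n (pottsDual n t) = t := by
  have h1 : t - 1 ≠ 0 := sub_ne_zero.2 ht
  unfold pottsDual
  have : n / (t - 1) + 1 - 1 = n / (t - 1) := by ring
  rw [this, div_div_eq_mul_div]
  field_simp
  ring

lemma series_formula {n : ℝ} (hn : n ≠ 0) {a b : ℝ} (ha : a ≠ 1) (hb : b ≠ 1)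
    (hab : a + b + n - 2 ≠ 0) :
    pottsDual n (pottsDual n a * pottsDual n b) = (a * b + n - 1) / (a + b + n - 2) := by
  have ha1 : a - 1 ≠ 0 := sub_ne_zero.2 ha
  have hb1 : b - 1 ≠ 0 := sub_ne_zero.2 hb
  have key : pottsDual n a * pottsDual n b - 1 = n * (a + b + n - 2) / ((a - 1) * (b - 1)) := by
    unfold pottsDual; field_simp; ring
  unfold pottsDual
  rw [show n / (a-1) + 1 = pottsDual n a from rfl, show n / (b-1) + 1 = pottsDual n b from rfl, key]
  rw [div_div_eq_mul_div]
  have hnn : n * (a + b + n - 2) ≠ 0 := mul_ne_zero hn hab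
  field_simp
  ring

lemma pottsGen_dual {n : ℝ} (hn : n ≠ 0) {y : ℝ} (hy : y ≠ 1) {z : ℝ}
    (hz : PottsGen n (pottsDual n y) z) : PottsGen n y (pottsDual n z) := by
  induction hz with
  | base => rw [pottsDual_pottsDual hn hy]; exact PottsGen.base
  | parallel ha hb iha ihb =>
    rename_i a b
    by_cases ha1 : a = 1
    · subst ha1; rw [one_mul]; exact ihb
    by_cases hb1 : b = 1
    · subst hb1; rw [mul_one]; exact iha
    · have := PottsGen.series iha ihb
      rwa [pottsDual_pottsDual hn ha1, pottsDual_pottsDual hn hb1] at this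
  | series ha hb iha ihb =>
    rename_i a b
    by_cases hD : pottsDual n a * pottsDual n b = 1
    · rw [hD, pottsDual_one, pottsDual_one]
      have := PottsGen.parallel iha ihb
      rwa [hD] at this
    · rw [pottsDual_pottsDual hn hD]
      exact PottsGen.parallel iha ihb

lemma closure_mul {n w : ℝ} {a b : ℝ}
    (ha : a ∈ closure {z : ℝ | PottsGen n w z}) (hb : b ∈ closure {z : ℝ | PottsGen n w z}) :
    a * b ∈ closure {z : ℝ | PottsGen n w z} := by
  obtain ⟨f, hf, hfa⟩ := mem_closure_iff_seq_limit.1 ha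
  obtain ⟨g, hg, hgb⟩ := mem_closure_iff_seq_limit.1 hb
  exact mem_closure_iff_seq_limit.2 ⟨fun k => f k * g k,
    fun k => PottsGen.parallel (hf k) (hg k), hfa.mul hgb⟩

lemma closure_series {n w : ℝ} (hn : n ≠ 0) {a b : ℝ}
    (ha : a ∈ closure {z : ℝ | PottsGen n w z}) (hb : b ∈ closure {z : ℝ | PottsGen n w z})
    (ha1 : a ≠ 1) (hb1 : b ≠ 1) (hab : a + b + n - 2 ≠ 0) :
    (a * b + n - 1) / (a + b + n - 2) ∈ closure {z : ℝ | PottsGen n w z} := by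
  obtain ⟨f, hf, hfa⟩ := mem_closure_iff_seq_limit.1 ha
  obtain ⟨g, hg, hgb⟩ := mem_closure_iff_seq_limit.1 hb
  refine mem_closure_iff_seq_limit.2 ⟨fun k => pottsDual n (pottsDual n (f k) * pottsDual n (g k)),
    fun k => PottsGen.series (hf k) (hg k), ?_⟩
  have hsum : Filter.Tendsto (fun k => f k + g k + n - 2) Filter.atTop (nhds (a + b + n - 2)) :=
    Filter.Tendsto.sub (Filter.Tendsto.add (hfa.add hgb) tendsto_const_nhds) tendsto_const_nhds
  have hG : Filter.Tendsto (fun k => (f k * g k + n - 1) / (f k + g k + n - 2)) Filter.atTop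
      (nhds ((a * b + n - 1) / (a + b + n - 2))) :=
    Filter.Tendsto.div (Filter.Tendsto.sub (Filter.Tendsto.add (hfa.mul hgb) tendsto_const_nhds)
      tendsto_const_nhds) hsum hab
  refine hG.congr' ?_
  have h1 : ∀ᶠ k in Filter.atTop, f k ≠ 1 := hfa.eventually_ne ha1
  have h2 : ∀ᶠ k in Filter.atTop, g k ≠ 1 := hgb.eventually_ne hb1
  have h3 : ∀ᶠ k in Filter.atTop, f k + g k + n - 2 ≠ 0 := hsum.eventually_ne hab
  filter_upwards [h1, h2, h3] with k hk1 hk2 hk3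
  exact (series_formula hn hk1 hk2 hk3).symm

lemma core_orbit {n : ℝ} (hn : 2 < n) {C : Set ℝ} {μ : ℝ}
    (hμn : μ < 0) (hμ1 : -1 < μ)
    (hstep : ∀ v : ℝ, v ≠ 0 → |v| ≤ |μ| →
      (1 + (n-1)*v)/(1-v) ∈ C → (1 + (n-1)*(μ*v))/(1-μ*v) ∈ C)
    (hinit : (1 + (n-1)*μ)/(1-μ) ∈ C) :
    ∀ ε > 0, (∃ u ∈ C, 1 < u ∧ u < 1+ε) ∧ (∃ u ∈ C, 1-ε < u ∧ u < 1 ∧ 0 < u) := by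
  set m := |μ| with hm
  have hm0 : 0 < m := abs_pos.2 (ne_of_lt hμn)
  have hm1 : m < 1 := abs_lt.2 ⟨hμ1, by linarith⟩
  have hμ0 : μ ≠ 0 := ne_of_lt hμn
  have hpowle : ∀ j : ℕ, m^(j+1) ≤ m := by
    intro j
    calc m^(j+1) ≤ m^1 := pow_le_pow_of_le_one (le_of_lt hm0) (le_of_lt hm1) (by omega)
    _ = m := pow_one _
  -- membership of the whole orbit
  have memb : ∀ j : ℕ, (1 + (n-1)*μ^(j+1))/(1-μ^(j+1)) ∈ C := by
    intro j
    induction j with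
    | zero => simpa using hinit
    | succ j ih =>
      have h1 : μ^(j+1) ≠ 0 := pow_ne_zero _ hμ0
      have h2 : |μ^(j+1)| ≤ |μ| := by rw [abs_pow]; exact hpowle j
      have := hstep _ h1 h2 ih
      rwa [show μ * μ^(j+1) = μ^(j+1+1) by rw [pow_succ]; ring] at this
  -- generic facts about u_j
  have facts : ∀ j : ℕ, 0 < 1 - μ^(j+1) ∧
      (1 + (n-1)*μ^(j+1))/(1-μ^(j+1)) - 1 = n*μ^(j+1)/(1-μ^(j+1)) ∧
      |(1 + (n-1)*μ^(j+1))/(1-μ^(j+1)) - 1| ≤ n * m^(j+1) / (1-m) := by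
    intro j
    set v := μ^(j+1) with hv
    have habsv : |v| = m^(j+1) := by rw [hv, abs_pow]
    have hvm : |v| ≤ m := by rw [habsv]; exact hpowle j
    have hvlt : |v| < 1 := lt_of_le_of_lt hvm hm1
    have hden : 0 < 1 - v := by have := abs_lt.1 hvlt; linarith [this.2]
    have hdenm : 1 - m ≤ 1 - v := by
      have h := le_trans (le_abs_self v) hvm; linarith
    have heq : (1 + (n-1)*v)/(1-v) - 1 = n*v/(1-v) := by
      field_simp; ring
    refine ⟨hden, heq, ?_⟩
    rw [heq, abs_div, abs_of_pos hden, abs_mul, abs_of_pos (by linarith : (0:ℝ) < n), habsv]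
    rw [div_le_div_iff₀ hden (by linarith : (0:ℝ) < 1 - m)]
    have h1 : 0 ≤ n * m^(j+1) := by positivity
    nlinarith [pow_nonneg (le_of_lt hm0) (j+1)]
  intro ε hε
  set δ := min ε (1/2) with hδ
  have hδ0 : 0 < δ := lt_min hε (by norm_num)
  have hδn : 0 < δ * (1-m) / n := by
    apply div_pos (mul_pos hδ0 (by linarith)) (by linarith)
  obtain ⟨K, hK⟩ := exists_pow_lt_of_lt_one hδn hm1
  have bound : ∀ j : ℕ, K ≤ j + 1 → n * m^(j+1) / (1-m) < δ := by
    intro j hj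
    have h1 : m^(j+1) ≤ m^K := pow_le_pow_of_le_one (le_of_lt hm0) (le_of_lt hm1) hj
    have h2 : m^(j+1) < δ * (1-m)/n := lt_of_le_of_lt h1 hK
    rw [div_lt_iff₀ (by linarith : (0:ℝ) < 1 - m)]
    rw [lt_div_iff₀ (by linarith : (0:ℝ) < n)] at h2
    nlinarith
  constructor
  · -- above 1 : even exponent
    set j := 2*K+1 with hj
    obtain ⟨hden, heq, habs⟩ := facts j
    have hb : n * m^(j+1) / (1-m) < δ := bound j (by omega)
    have hvpos : 0 < μ^(j+1) := by
      have he : Even (j+1) := ⟨K+1, by omega⟩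
      exact he.pow_pos hμ0
    refine ⟨_, memb j, ?_, ?_⟩
    · have h0 : 0 < n*μ^(j+1)/(1-μ^(j+1)) := by positivity
      rw [← heq] at h0; linarith
    · have h2 : (1 + (n-1)*μ^(j+1))/(1-μ^(j+1)) - 1 < δ :=
        lt_of_le_of_lt (le_trans (le_abs_self _) habs) hb
      have : δ ≤ ε := min_le_left _ _
      linarith
  · -- below 1 : odd exponent
    set j := 2*K+2 with hj
    obtain ⟨hden, heq, habs⟩ := facts j
    have hb : n * m^(j+1) / (1-m) < δ := bound j (by omega)
    have hvneg : μ^(j+1) < 0 := by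
      have hodd : Odd (j+1) := ⟨K+1, by omega⟩
      exact hodd.pow_neg hμn
    have habs2 : |(1 + (n-1)*μ^(j+1))/(1-μ^(j+1)) - 1| < δ := lt_of_le_of_lt habs hb
    have hlt1 : (1 + (n-1)*μ^(j+1))/(1-μ^(j+1)) - 1 < 0 := by
      rw [heq]
      apply div_neg_of_neg_of_pos (by nlinarith) hden
    have habs3 := abs_lt.1 habs2
    refine ⟨_, memb j, ?_, by linarith, ?_⟩
    · have : δ ≤ ε := min_le_left _ _; linarith [habs3.1]
    · have : δ ≤ 1/2 := min_le_right _ _; linarith [habs3.1]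

lemma dense_of_one_approx {n w : ℝ} (hw : w < 0)
    (happ : ∀ ε > 0, (∃ u ∈ closure {z : ℝ | PottsGen n w z}, 1 < u ∧ u < 1+ε) ∧
      (∃ u ∈ closure {z : ℝ | PottsGen n w z}, 1-ε < u ∧ u < 1 ∧ 0 < u)) :
    Dense {z : ℝ | PottsGen n w z} := by
  set C := closure {z : ℝ | PottsGen n w z} with hCdef
  have hCclosed : IsClosed C := isClosed_closure
  have hpow : ∀ u ∈ C, ∀ k : ℕ, u^(k+1) ∈ C := by
    intro u hu k
    induction k with
    | zero => simpa using hu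
    | succ k ih => rw [pow_succ]; exact closure_mul ih hu
  -- every positive real in C
  have hpos : ∀ t : ℝ, 0 < t → t ∈ C := by
    intro t ht
    rw [hCdef, ← closure_closure (s := {z : ℝ | PottsGen n w z})]
    rw [Metric.mem_closure_iff]
    intro ε hε
    rcases le_or_gt 1 t with h1t | h1t
    · -- t ≥ 1
      have hε' : 0 < ε / (t+1) := by positivity
      obtain ⟨⟨u, huC, hu1, hu2⟩, -⟩ := happ _ hε'
      obtain ⟨k, hk1, hk2⟩ := exists_nat_pow_near h1t hu1
      refine ⟨u^(k+1), hpow u huC k, ?_⟩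
      rw [Real.dist_eq, abs_lt]
      constructor
      · have : u^(k+1) ≤ u * t := by
          rw [pow_succ, mul_comm]
          exact mul_le_mul_of_nonneg_left hk1 (by linarith)
        have h3 : u * t - t < ε := by
          have : (u - 1) * t < (ε/(t+1)) * (t+1) := by
            apply mul_lt_mul' (by linarith) (by linarith) (by linarith) hε'
          rw [div_mul_cancel₀ _ (by linarith : t + 1 ≠ 0)] at this
          nlinarith
        nlinarith
      · linarith
    · -- 0 < t < 1
      have hε' : 0 < min (ε/2) (1/2) := by positivity
      obtain ⟨-, ⟨u, huC, hu1, hu2, hu0⟩⟩ := happ _ hε'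
      have h1u : 1 < 1/u := by rw [lt_div_iff₀ hu0]; linarith
      have h1t' : 1 ≤ 1/t := by rw [le_div_iff₀ ht]; linarith
      obtain ⟨k, hk1, hk2⟩ := exists_nat_pow_near h1t' h1u
      have hupow : ∀ j : ℕ, (1/u)^j = 1/u^j := by intro j; rw [one_div, one_div, inv_pow]
      rw [hupow] at hk1 hk2
      have hupos : ∀ j : ℕ, (0:ℝ) < u^j := fun j => pow_pos hu0 j
      have htk : t ≤ u^k := by
        rw [div_le_div_iff₀ (hupos k) ht] at hk1; linarith [hk1]
      have htk2 : u^(k+1) < t := by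
        rw [div_lt_div_iff₀ ht (hupos (k+1))] at hk2; linarith [hk2]
      refine ⟨u^(k+1), hpow u huC k, ?_⟩
      rw [Real.dist_eq, abs_lt]
      constructor
      · linarith
      · have h3 : u^k ≤ 1 := pow_le_one₀ (le_of_lt hu0) (le_of_lt hu2)
        have h4 : u^k - u^(k+1) = u^k * (1-u) := by rw [pow_succ]; ring
        have h5 : u^k * (1-u) ≤ 1 - u := by nlinarith [hupos k]
        have h6 : 1 - u < min (ε/2) (1/2) := by linarith
        have h7 : min (ε/2) (1/2) ≤ ε/2 := min_le_left _ _
        linarith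
  have hzero : (0:ℝ) ∈ C := by
    obtain ⟨-, ⟨u, huC, hu1, hu2, hu0⟩⟩ := happ (1/2) (by norm_num)
    rw [hCdef, ← closure_closure (s := {z : ℝ | PottsGen n w z})]
    refine mem_closure_iff_seq_limit.2 ⟨fun k => u^(k+1), fun k => hpow u huC k, ?_⟩
    have := tendsto_pow_atTop_nhds_zero_of_lt_one (le_of_lt hu0) hu2
    exact this.comp (Filter.tendsto_add_atTop_nat 1)
  have hwC : w ∈ C := subset_closure PottsGen.base
  intro t
  show t ∈ C
  rcases lt_trichotomy t 0 with h | h | h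
  · have hdiv : 0 < t / w := div_pos_of_neg_of_neg h hw
    have := closure_mul hwC (hpos _ hdiv)
    rwa [mul_comm, div_mul_cancel₀ t (ne_of_lt hw)] at this
  · rwa [h]
  · exact hpos t h

lemma gen_pow {n w : ℝ} : ∀ k : ℕ, PottsGen n w (w^(k+1)) := by
  intro k
  induction k with
  | zero => simpa using PottsGen.base
  | succ k ih => rw [pow_succ]; exact PottsGen.parallel ih PottsGen.base

/-- Case A : -1 < w < 0 -/
lemma denseA {n w : ℝ} (hn : 2 < n) (h1 : -1 < w) (h0 : w < 0) :
    Dense {z : ℝ | PottsGen n w z} := by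
  have hn0 : n ≠ 0 := by linarith
  set C := closure {z : ℝ | PottsGen n w z} with hCdef
  have hzero : (0:ℝ) ∈ C := by
    refine mem_closure_iff_seq_limit.2 ⟨fun k => w^(k+1), fun k => gen_pow k, ?_⟩
    have habs : |w| < 1 := abs_lt.2 ⟨h1, by linarith⟩
    exact (tendsto_pow_atTop_nhds_zero_of_abs_lt_one habs).comp (Filter.tendsto_add_atTop_nat 1)
  apply dense_of_one_approx h0
  have hn1 : (0:ℝ) < n - 1 := by linarith
  have hμn : -1/(n-1) < 0 := by
    apply div_neg_of_neg_of_pos (by norm_num) hn1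
  have hμ1 : (-1:ℝ) < -1/(n-1) := by
    rw [neg_div, neg_lt_neg_iff, div_lt_one hn1]; linarith
  have habsμ : |(-1)/(n-1)| = 1/(n-1) := by
    rw [abs_div, abs_of_pos hn1]; norm_num
  apply core_orbit hn hμn hμ1 ?_ ?_
  · -- step
    intro v hv0 hvle hb
    rw [habsμ] at hvle
    have hvlt : |v| < 1 := by
      have : 1/(n-1) < 1 := by rw [div_lt_one hn1]; linarith
      linarith [hvle]
    have hvlt' := abs_lt.1 hvlt
    have hden : (0:ℝ) < 1 - v := by linarith [hvlt'.2]
    have hden' : (1:ℝ) - v ≠ 0 := ne_of_gt hden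
    set b := (1 + (n-1)*v)/(1-v) with hbdef
    have hb1 : b ≠ 1 := by
      have heq : b - 1 = n*v/(1-v) := by rw [hbdef]; field_simp; ring
      have : b - 1 ≠ 0 := by rw [heq]; exact div_ne_zero (mul_ne_zero hn0 hv0) hden'
      exact sub_ne_zero.1 this
    have hsum_eq : b + 0 + n - 2 = (n - 1 + v)/(1-v) := by
      rw [hbdef]; field_simp; ring
    have hnum : 0 < n - 1 + v := by
      have : 1/(n-1) < n - 1 := by
        rw [div_lt_iff₀ hn1]; nlinarith
      linarith [hvlt'.1, hvle, this]
    have hsum_ne : b + 0 + n - 2 ≠ 0 := by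
      rw [hsum_eq]; exact ne_of_gt (div_pos hnum hden)
    have hmem := closure_series hn0 hb hzero hb1 (by norm_num) hsum_ne
    have hμv : (1:ℝ) - (-1/(n-1))*v ≠ 0 := by
      have h2 : |(-1/(n-1))*v| < 1 := by
        rw [abs_mul, habsμ]
        calc 1/(n-1) * |v| ≤ 1/(n-1) * 1 := by
              apply mul_le_mul_of_nonneg_left (le_of_lt hvlt) (by positivity)
        _ < 1 := by rw [mul_one, div_lt_one hn1]; linarith
      have := (abs_lt.1 h2).2; linarith
    have h7 : n - 1 + v ≠ 0 := ne_of_gt hnum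
    have hid : (b * 0 + n - 1)/(b + 0 + n - 2) = (1 + (n-1)*(-1/(n-1)*v))/(1 - -1/(n-1)*v) := by
      rw [div_eq_div_iff hsum_ne hμv, hbdef]
      field_simp
      ring
    rwa [hid] at hmem
  · -- init
    have : (1 + (n-1)*(-1/(n-1)))/(1 - -1/(n-1)) = 0 := by
      field_simp
      norm_num
    rw [this]; exact hzero

/-- Case C1 : w < 0 and dual < -1 -/
lemma denseC1 {n w : ℝ} (hn : 2 < n) (h0 : w < 0) (hd : pottsDual n w < -1) :
    Dense {z : ℝ | PottsGen n w z} := by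
  have hn0 : n ≠ 0 := by linarith
  have hw1 : w - 1 < 0 := by linarith
  have hA : 2 - 2*w < n := by
    have h2 : n / (w-1) < -2 := by
      have := hd; unfold pottsDual at this; linarith
    rw [div_lt_iff_of_neg hw1] at h2; linarith
  have hApos : 0 < w + n - 1 := by linarith
  have hBpos : (0:ℝ) < 1 - w := by linarith
  have hBA : 1 - w < w + n - 1 := by linarith
  set C := closure {z : ℝ | PottsGen n w z} with hCdef
  have hwC : w ∈ C := subset_closure PottsGen.base
  apply dense_of_one_approx h0
  have hμn : (w-1)/(w+n-1) < 0 := div_neg_of_neg_of_pos hw1 hApos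
  have hμ1 : -1 < (w-1)/(w+n-1) := by
    rw [lt_div_iff₀ hApos]; linarith
  have habsμ : |(w-1)/(w+n-1)| = (1-w)/(w+n-1) := by
    rw [abs_div, abs_of_neg hw1, abs_of_pos hApos]; ring_nf
  apply core_orbit hn hμn hμ1 ?_ ?_
  · -- step
    intro v hv0 hvle hb
    rw [habsμ] at hvle
    have hμlt1 : (1-w)/(w+n-1) < 1 := by rw [div_lt_one hApos]; linarith
    have hvlt : |v| < 1 := lt_of_le_of_lt hvle hμlt1
    have hvlt' := abs_lt.1 hvlt
    have hden : (0:ℝ) < 1 - v := by linarith [hvlt'.2]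
    have hden' : (1:ℝ) - v ≠ 0 := ne_of_gt hden
    have hvle' := abs_le.1 hvle
    set b := (1 + (n-1)*v)/(1-v) with hbdef
    have hb1 : b ≠ 1 := by
      have heq : b - 1 = n*v/(1-v) := by rw [hbdef]; field_simp; ring
      have : b - 1 ≠ 0 := by rw [heq]; exact div_ne_zero (mul_ne_zero hn0 hv0) hden'
      exact sub_ne_zero.1 this
    have hsum_eq : w + b + n - 2 = (w + n - 1 + (1-w)*v)/(1-v) := by
      rw [hbdef]; field_simp; ring
    have hnum : 0 < w + n - 1 + (1-w)*v := by
      have h3 : -((1-w)/(w+n-1)) ≤ v := hvle'.1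
      have h4 : (1-w) * (-((1-w)/(w+n-1))) ≤ (1-w) * v :=
        mul_le_mul_of_nonneg_left h3 (le_of_lt hBpos)
      have h5 : (1-w) * (-((1-w)/(w+n-1))) = -((1-w)^2/(w+n-1)) := by ring
      have h6 : (1-w)^2/(w+n-1) < w + n - 1 := by
        rw [div_lt_iff₀ hApos]; nlinarith
      nlinarith [h4, h5 ▸ h4]
    have hsum_ne : w + b + n - 2 ≠ 0 := by
      rw [hsum_eq]; exact ne_of_gt (div_pos hnum hden)
    have hmem := closure_series hn0 hwC hb (by intro h; rw [h] at h0; linarith) hb1 hsum_ne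
    have hμv : (1:ℝ) - (w-1)/(w+n-1)*v ≠ 0 := by
      have h2 : |(w-1)/(w+n-1)*v| < 1 := by
        rw [abs_mul, habsμ]
        calc (1-w)/(w+n-1) * |v| ≤ (1-w)/(w+n-1) * 1 := by
              apply mul_le_mul_of_nonneg_left (le_of_lt hvlt) (by positivity)
        _ < 1 := by rw [mul_one]; exact hμlt1
      have := (abs_lt.1 h2).2; linarith
    have hA' : w + n - 1 ≠ 0 := ne_of_gt hApos
    have hid : (w * b + n - 1)/(w + b + n - 2)
        = (1 + (n-1)*((w-1)/(w+n-1)*v))/(1 - (w-1)/(w+n-1)*v) := by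
      rw [hbdef]
      rw [← sub_ne_zero] at hsum_ne
      field_simp
      ring
    rwa [hid] at hmem
  · -- init
    have : (1 + (n-1)*((w-1)/(w+n-1)))/(1 - (w-1)/(w+n-1)) = w := by
      have hA' : w + n - 1 ≠ 0 := ne_of_gt hApos
      field_simp
      ring
      field_simp
    rw [this]; exact hwC

/-- transfer density from the dual generator -/
lemma dense_transfer {n y : ℝ} (hn : n ≠ 0) (hy : y ≠ 1) (hx1 : pottsDual n y ≠ 1)
    (hX : Dense {z : ℝ | PottsGen n (pottsDual n y) z}) :
    Dense {z : ℝ | PottsGen n y z} := by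
  have hmain : ∀ t : ℝ, t ≠ 1 → t ∈ closure {z : ℝ | PottsGen n y z} := by
    intro t ht
    have hu1 : pottsDual n t ≠ 1 := fun h => ht ((pottsDual_eq_one_iff hn).1 h)
    obtain ⟨f, hf, hftend⟩ := mem_closure_iff_seq_limit.1 (hX (pottsDual n t))
    refine mem_closure_iff_seq_limit.2 ⟨fun k => pottsDual n (f k),
      fun k => pottsGen_dual hn hy (hf k), ?_⟩
    have hcont : ContinuousAt (pottsDual n) (pottsDual n t) := by
      unfold pottsDual
      apply ContinuousAt.add ?_ continuousAt_const
      apply ContinuousAt.div continuousAt_const (by fun_prop)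
      rw [sub_ne_zero]; exact hu1
    have := hcont.tendsto.comp hftend
    rwa [pottsDual_pottsDual hn ht] at this
  have h2 : closure {t : ℝ | t ≠ 1} ⊆ closure {z : ℝ | PottsGen n y z} :=
    closure_minimal hmain isClosed_closure
  have h3 : Dense {t : ℝ | t ≠ 1} := dense_compl_singleton 1
  intro t
  exact h2 (h3 t)

/-- For `n > 2`, `y < 0`, `x = pottsDual n y < 0` and `(x, y) ≠ (-1, -1)`, the set of
weights generated from `y` by parallel and series compositions is dense in `ℝ`. -/
theorem dense_potts_weights (n y : ℝ) (hn : 2 < n) (hy : y < 0)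
    (hx : pottsDual n y < 0) (hxy : ¬(pottsDual n y = -1 ∧ y = -1)) :
    Dense {z : ℝ | PottsGen n y z} := by
  have hn0 : n ≠ 0 := by linarith
  have hy1 : y ≠ 1 := by linarith
  have hx1 : pottsDual n y ≠ 1 := by linarith
  by_cases hA : -1 < y
  · exact denseA hn hA hy
  by_cases hB : -1 < pottsDual n y
  · exact dense_transfer hn0 hy1 hx1 (denseA hn hB hx)
  -- now y ≤ -1 and x ≤ -1
  by_cases hC : pottsDual n y < -1
  · exact denseC1 hn hy hC
  · -- x = -1, so y < -1
    have hxe : pottsDual n y = -1 := le_antisymm (not_lt.1 hB) (not_lt.1 hC)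
    have hyl : y < -1 := lt_of_le_of_ne (not_lt.1 hA) (fun h => hxy ⟨hxe, h⟩)
    apply dense_transfer hn0 hy1 hx1
    apply denseC1 hn hx
    rwa [pottsDual_pottsDual hn0 hy1]
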